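/- Let f : R^s → R^s be a differentiable vector field whose image lies in a linear subspace S of R^s of dimension s−d, and let W be a d×s matrix whose rows form a basis of the orthogonal complement S^⊥. For a point x* with f(x*)=0, the following are equivalent: (i) ker(J(f)(x*)) ∩ S = {0}, where J(f)(x*) is the Jacobian of f at x*; (ii) there exist s−d coordinate functions f_{i_1},…,f_{i_{s-d}} spanning the linear span of f_1,…,f_s such that the s×s matrix whose first s−d rows are the gradients of f_{i_1},…,f_{i_{s-d}} at x* and whose last d rows are the rows of W has nonzero determinant. -/

import Mathlib

noncomputable def dotCLM {s : ℕ} (c : Fin s → ℝ) : (Fin s → ℝ) →L[ℝ] ℝ :=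
  ∑ i, c i • (ContinuousLinearMap.proj i : (Fin s → ℝ) →L[ℝ] ℝ)

lemma dotCLM_apply {s : ℕ} (c v : Fin s → ℝ) : dotCLM c v = ∑ i, c i * v i := by
  simp [dotCLM]

lemma grad_zero {s : ℕ} {f : (Fin s → ℝ) → (Fin s → ℝ)} (hf : Differentiable ℝ f)
    (xs : Fin s → ℝ) (c : Fin s → ℝ) (hc : ∀ x, ∑ i, c i * f x i = 0) (v : Fin s → ℝ) :
    ∑ i, c i * fderiv ℝ f xs v i = 0 := by
  have h1 : HasFDerivAt (fun x => dotCLM c (f x)) ((dotCLM c).comp (fderiv ℝ f xs)) xs :=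
    (dotCLM c).hasFDerivAt.comp xs (hf xs).hasFDerivAt
  have h2 : (fun x => dotCLM c (f x)) = fun _ => (0:ℝ) :=
    funext fun x => by rw [dotCLM_apply]; exact hc x
  rw [h2] at h1
  have h3 : ((dotCLM c).comp (fderiv ℝ f xs)) = 0 := h1.unique (hasFDerivAt_const 0 xs)
  have h4 : dotCLM c (fderiv ℝ f xs v) = 0 := by
    have := ContinuousLinearMap.ext_iff.mp h3 v
    simpa using this
  rw [← h4, dotCLM_apply]

lemma single_sum_mul {s m : ℕ} (a : Fin m → ℝ) (ι : Fin m → Fin s) (v : Fin s → ℝ) :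
    ∑ i, (∑ k, a k • (Pi.single (ι k) (1:ℝ) : Fin s → ℝ)) i * v i = ∑ k, a k * v (ι k) := by
  simp only [Finset.sum_apply, Pi.smul_apply, Pi.single_apply, smul_eq_mul, mul_ite, mul_one,
    mul_zero, Finset.sum_mul, ite_mul, zero_mul]
  rw [Finset.sum_comm]
  refine Finset.sum_congr rfl fun k _ => ?_
  rw [Finset.sum_ite_eq' Finset.univ (ι k) (fun i => a k * v i)]
  simp

/-- Characterization of non-degenerate steady states: (i) ker(J(f)(x*)) ∩ S = {0}
iff (ii) there are s−d coordinate functions of f spanning the span of all coordinates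
such that the square matrix built from their gradients at x* and the rows of W has
nonzero determinant. -/
theorem stmt_1 {s d : ℕ} (hd : d ≤ s)
    (f : (Fin s → ℝ) → (Fin s → ℝ)) (hf : Differentiable ℝ f)
    (S : Submodule ℝ (Fin s → ℝ)) (hdim : Module.finrank ℝ S = s - d)
    (hfS : ∀ x, f x ∈ S)
    (W : Matrix (Fin d) (Fin s) ℝ)
    (hW : LinearIndependent ℝ (fun i => W i))
    (hSW : ∀ v, v ∈ S ↔ W.mulVec v = 0)
    (xs : Fin s → ℝ) (hxs : f xs = 0) :
    (∀ v ∈ S, (Matrix.of fun i j => fderiv ℝ f xs (Pi.single j 1) i).mulVec v = 0 → v = 0)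
    ↔ ∃ ι : Fin (s - d) → Fin s,
        Submodule.span ℝ (Set.range (fun k => fun x => f x (ι k)))
          = Submodule.span ℝ (Set.range (fun i => fun x : Fin s → ℝ => f x i)) ∧
        ((Matrix.fromRows
            (Matrix.of fun k j => fderiv ℝ f xs (Pi.single j 1) (ι k))
            W).submatrix
          (finSumFinEquiv.trans (finCongr (by omega : s - d + d = s))).symm id).det ≠ 0 := by
  classical
  set J : Matrix (Fin s) (Fin s) ℝ := Matrix.of fun i j => fderiv ℝ f xs (Pi.single j 1) i
    with hJdef
  set e : Fin s ≃ (Fin (s - d) ⊕ Fin d) :=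
    (finSumFinEquiv.trans (finCongr (by omega : s - d + d = s))).symm with hedef
  constructor
  · intro hi
    -- the stacked (s+d) × s matrix has full rank, so its rows span ℝ^s
    set M : Matrix (Fin s ⊕ Fin d) (Fin s) ℝ := Matrix.fromRows J W with hMdef
    have hker : ∀ v, M.mulVec v = 0 → v = 0 := by
      intro v hv
      rw [hMdef, Matrix.fromRows_mulVec] at hv
      have h1 : J.mulVec v = 0 := funext fun i => congrFun hv (Sum.inl i)
      have h2 : W.mulVec v = 0 := funext fun i => congrFun hv (Sum.inr i)
      exact hi v ((hSW v).mpr h2) h1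
    have hkerbot : LinearMap.ker M.mulVecLin = ⊥ := by
      rw [LinearMap.ker_eq_bot']
      intro v hv
      exact hker v (by simpa [Matrix.mulVecLin_apply] using hv)
    have hrank : M.rank = s := by
      have h := LinearMap.finrank_range_add_finrank_ker M.mulVecLin
      rw [hkerbot, finrank_bot] at h
      have : Module.finrank ℝ (Fin s → ℝ) = s := Module.finrank_fin_fun ℝ
      rw [this] at h
      simpa [Matrix.rank] using h
    have hspanrows : Submodule.span ℝ (Set.range (fun p => M p)) = ⊤ := by
      apply Submodule.eq_top_of_finrank_eq
      have h := (Matrix.rank_eq_finrank_span_row M).symm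
      rw [hrank] at h
      rw [Module.finrank_fin_fun]
      exact h
    have hrangeM : (Set.range fun p => M p)
        = Set.range (fun i => J i) ∪ Set.range (fun i => W i) := by
      rw [show (fun p => M p) = Sum.elim (fun i => J i) (fun i => W i) from
        funext fun p => by cases p <;> rfl]
      exact Set.Sum.elim_range _ _
    obtain ⟨b, hbt, hwb, htb, hbind⟩ :=
      exists_linearIndepOn_id_extension ((linearIndepOn_id_range_iff hW.injective).mpr hW)
        (Set.subset_union_right :
          Set.range (fun i => W i) ⊆ Set.range (fun i => J i) ∪ Set.range (fun i => W i))
    have hbfin : b.Finite :=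
      (((Set.finite_range _).union (Set.finite_range _)).subset hbt)
    haveI : Fintype b := hbfin.fintype
    haveI : Fintype (Set.range fun i => W i) := (Set.finite_range _).fintype
    have hbspan : Submodule.span ℝ b = ⊤ := by
      have h := Submodule.span_le.mpr htb
      rw [← hrangeM, hspanrows] at h
      exact top_unique h
    have hcardb : b.toFinset.card = s := by
      have h1 := finrank_span_set_eq_card hbind
      rw [hbspan, finrank_top, Module.finrank_fin_fun] at h1
      exact h1.symm
    have hcardw : (Set.range fun i => W i).toFinset.card = d := by
      rw [Set.toFinset_range, Finset.card_image_of_injective _ hW.injective,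
        Finset.card_univ, Fintype.card_fin]
    have hsub : (Set.range fun i => W i).toFinset ⊆ b.toFinset :=
      Set.toFinset_subset_toFinset.mpr hwb
    have hcard' : (b.toFinset \ (Set.range fun i => W i).toFinset).card = s - d := by
      rw [Finset.card_sdiff_of_subset hsub, hcardb, hcardw]
    set emb : Fin (s - d) → (Fin s → ℝ) :=
      fun k => ((Finset.equivFinOfCardEq hcard').symm k : Fin s → ℝ) with hembdef
    have hembmem : ∀ k, emb k ∈ b.toFinset \ (Set.range fun i => W i).toFinset :=
      fun k => ((Finset.equivFinOfCardEq hcard').symm k).2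
    have hembinj : Function.Injective emb := fun k₁ k₂ h =>
      (Finset.equivFinOfCardEq hcard').symm.injective (Subtype.coe_injective h)
    have hembb : ∀ k, emb k ∈ b := fun k =>
      Set.mem_toFinset.mp (Finset.mem_sdiff.mp (hembmem k)).1
    have hembnw : ∀ k, emb k ∉ Set.range (fun i => W i) := fun k h =>
      (Finset.mem_sdiff.mp (hembmem k)).2 (Set.mem_toFinset.mpr h)
    have hmem : ∀ k : Fin (s - d), ∃ i : Fin s, J i = emb k := by
      intro k
      have h := hbt (hembb k)
      rcases h with h | h
      · exact h.imp fun i hi => hi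
      · exact absurd h (hembnw k)
    choose ι hι using hmem
    -- combined family is linearly independent
    have hmemb : ∀ p : Fin (s - d) ⊕ Fin d,
        Sum.elim (fun k => J (ι k)) (fun i => W i) p ∈ b := by
      rintro (k | i)
      · rw [Sum.elim_inl, hι k]; exact hembb k
      · exact hwb ⟨i, rfl⟩
    set g' : (Fin (s - d) ⊕ Fin d) → b :=
      fun p => ⟨Sum.elim (fun k => J (ι k)) (fun i => W i) p, hmemb p⟩ with hg'def
    have hg'inj : Function.Injective g' := by
      rintro (k₁ | i₁) (k₂ | i₂) h
      · have h' : J (ι k₁) = J (ι k₂) := congrArg Subtype.val h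
        rw [hι k₁, hι k₂] at h'
        exact congrArg Sum.inl (hembinj h')
      · have h' : J (ι k₁) = W i₂ := congrArg Subtype.val h
        rw [hι k₁] at h'
        exact absurd ⟨i₂, h'.symm⟩ (hembnw k₁)
      · have h' : W i₁ = J (ι k₂) := congrArg Subtype.val h
        rw [hι k₂] at h'
        exact absurd ⟨i₁, h'⟩ (hembnw k₂)
      · exact congrArg Sum.inr (hW.injective (congrArg Subtype.val h))
    have hgind : LinearIndependent ℝ (Sum.elim (fun k => J (ι k)) (fun i => W i)) :=
      hbind.comp g' hg'inj
    have hιinj : Function.Injective ι := fun k₁ k₂ h =>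
      hembinj (by rw [← hι, ← hι, h])
    have hJιind : LinearIndependent ℝ (fun k => J (ι k)) :=
      hgind.comp Sum.inl Sum.inl_injective
    refine ⟨ι, ?_, ?_⟩
    · -- span equality of coordinate functions
      have hFind : LinearIndependent ℝ (fun k => fun x => f x (ι k)) := by
        rw [Fintype.linearIndependent_iff]
        intro a ha
        set c : Fin s → ℝ := ∑ k, a k • (Pi.single (ι k) (1:ℝ) : Fin s → ℝ) with hcdef
        have hc0 : ∀ x, ∑ i, c i * f x i = 0 := by
          intro x
          rw [hcdef, single_sum_mul]
          have h := congrFun ha x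
          simpa using h
        have hgrad : ∀ j, ∑ k, a k * J (ι k) j = 0 := by
          intro j
          have h := grad_zero hf xs c hc0 (Pi.single j 1)
          rw [hcdef, single_sum_mul a ι (fun i => fderiv ℝ f xs (Pi.single j 1) i)] at h
          exact h
        intro k
        refine Fintype.linearIndependent_iff.mp hJιind a ?_ k
        funext j
        have h := hgrad j
        simpa [Finset.sum_apply] using h
      have hVfin : Module.finrank ℝ
          (Submodule.span ℝ (Set.range (fun k => fun x => f x (ι k)))) = s - d := by
        rw [finrank_span_eq_card hFind, Fintype.card_fin]
      set Φ : (Fin s → ℝ) →ₗ[ℝ] ((Fin s → ℝ) → ℝ) :=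
        { toFun := fun c => fun x => ∑ i, c i * f x i
          map_add' := by intro u v; funext x; simp [add_mul, Finset.sum_add_distrib]
          map_smul' := by intro r u; funext x; simp [Finset.mul_sum, mul_assoc] } with hΦdef
      have hT : Submodule.span ℝ (Set.range fun i => W i) ≤ LinearMap.ker Φ := by
        rw [Submodule.span_le]
        rintro _ ⟨i, rfl⟩
        simp only [SetLike.mem_coe, LinearMap.mem_ker]
        funext x
        have h := congrFun ((hSW (f x)).mp (hfS x)) i
        simpa [hΦdef, Matrix.mulVec, dotProduct] using h
      have hdT : Module.finrank ℝ (Submodule.span ℝ (Set.range fun i => W i)) = d := by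
        rw [finrank_span_eq_card hW, Fintype.card_fin]
      have hkerd : d ≤ Module.finrank ℝ (LinearMap.ker Φ) :=
        hdT ▸ Submodule.finrank_mono hT
      have hrn := LinearMap.finrank_range_add_finrank_ker Φ
      rw [Module.finrank_fin_fun] at hrn
      have hUrange : Submodule.span ℝ (Set.range fun i => fun x : Fin s → ℝ => f x i)
          ≤ LinearMap.range Φ := by
        rw [Submodule.span_le]
        rintro _ ⟨i, rfl⟩
        refine ⟨Pi.single i 1, ?_⟩
        funext x
        simp [hΦdef, Pi.single_apply, ite_mul, zero_mul]
      have hUle : Module.finrank ℝ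
          (Submodule.span ℝ (Set.range fun i => fun x : Fin s → ℝ => f x i)) ≤ s - d := by
        have h1 : Module.finrank ℝ (LinearMap.range Φ) ≤ s - d := by omega
        exact le_trans (Submodule.finrank_mono hUrange) h1
      have hVle : Submodule.span ℝ (Set.range (fun k => fun x => f x (ι k)))
          ≤ Submodule.span ℝ (Set.range fun i => fun x : Fin s → ℝ => f x i) := by
        apply Submodule.span_mono
        rintro _ ⟨k, rfl⟩
        exact ⟨ι k, rfl⟩
      haveI : FiniteDimensional ℝ
          (Submodule.span ℝ (Set.range fun i => fun x : Fin s → ℝ => f x i)) :=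
        FiniteDimensional.span_of_finite ℝ (Set.finite_range _)
      exact Submodule.eq_of_le_of_finrank_le hVle (by omega)
    · -- determinant nonzero
      have hrows : (fun i => ((Matrix.fromRows
            (Matrix.of fun k j => fderiv ℝ f xs (Pi.single j 1) (ι k)) W).submatrix e id) i)
          = (Sum.elim (fun k => J (ι k)) (fun i => W i)) ∘ e := by
        funext i
        funext j
        simp only [Function.comp_apply, Matrix.submatrix_apply, id_eq]
        cases e i <;> rfl
      have hind2 : LinearIndependent ℝ (fun i => ((Matrix.fromRows
            (Matrix.of fun k j => fderiv ℝ f xs (Pi.single j 1) (ι k)) W).submatrix e id) i) := by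
        rw [hrows]
        exact (linearIndependent_equiv e).mpr hgind
      have hu := Matrix.linearIndependent_rows_iff_isUnit.mp hind2
      exact ((Matrix.isUnit_iff_isUnit_det _).mp hu).ne_zero
  · rintro ⟨ι, -, hdet⟩ v hv hJv
    set A : Matrix (Fin (s - d)) (Fin s) ℝ :=
      Matrix.of fun k j => fderiv ℝ f xs (Pi.single j 1) (ι k) with hAdef
    have hU : IsUnit ((Matrix.fromRows A W).submatrix e id) :=
      (Matrix.isUnit_iff_isUnit_det _).mpr (Ne.isUnit hdet)
    have hinj := Matrix.mulVec_injective_iff_isUnit.mpr hU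
    have h0 : ((Matrix.fromRows A W).submatrix e id).mulVec v = 0 := by
      funext i
      have h1 : ((Matrix.fromRows A W).submatrix e id).mulVec v i
          = (Matrix.fromRows A W).mulVec v (e i) := rfl
      rw [h1, Matrix.fromRows_mulVec]
      rcases h : e i with k | i'
      · have : A.mulVec v k = J.mulVec v (ι k) := rfl
        rw [Sum.elim_inl, this]
        rw [hJv]
        rfl
      · rw [Sum.elim_inr]
        have := congrFun ((hSW v).mp hv) i'
        rw [this]
        rfl
    have := hinj (h0.trans (Matrix.mulVec_zero _).symm)
    exact this
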